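/- For every λ ∈ ℂ that is not a positive integer: Σ_{m_1>m_2≥1} 1/( m_1 (m_1−λ) m_2 (m_2−λ) ) = Σ_{m≥1} 1/( m^3 (m−λ) ) − Σ_{m_1>m_2≥1} 1/( m_1^2 (m_1−λ) m_2 ); in the notation of the paper, f(1,1,1,1;λ) = F(3;λ) − F(2,1;λ). -/

import Mathlib

open Finset Filter Topology

/-- Strictly decreasing tuples `m 0 > m 1 > ⋯ > m (N-1) ≥ 1` of positive integers,
padded by `0` from position `N` on. -/
def DecTuple (N : ℕ) : Set (ℕ → ℕ) :=
  {m | (∀ j, j + 1 < N → m (j + 1) < m j) ∧ (∀ j, j < N → 1 ≤ m j) ∧ ∀ j, N ≤ j → m j = 0}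

namespace F1111Aux

/-- Harmonic numbers, as complex numbers. -/
noncomputable def Hc (n : ℕ) : ℂ := ∑ i ∈ Finset.range n, ((i + 1 : ℕ) : ℂ)⁻¹

lemma Hc_succ (n : ℕ) : Hc (n + 1) = Hc n + ((n + 1 : ℕ) : ℂ)⁻¹ := by
  simp [Hc, Finset.sum_range_succ]

lemma ncast_ne (n : ℕ) : ((n + 1 : ℕ) : ℂ) ≠ 0 := by
  exact_mod_cast Nat.succ_ne_zero n

lemma norm_natC (n : ℕ) : ‖((n : ℕ) : ℂ)‖ = (n : ℝ) := RCLike.norm_natCast n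

lemma norm_Hc_le (n : ℕ) : ‖Hc n‖ ≤ n := by
  calc ‖Hc n‖ ≤ ∑ i ∈ Finset.range n, ‖((i + 1 : ℕ) : ℂ)⁻¹‖ := norm_sum_le _ _
    _ ≤ ∑ _i ∈ Finset.range n, 1 := by
        refine Finset.sum_le_sum fun i _ => ?_
        rw [norm_inv, norm_natC]
        rw [inv_le_one_iff₀]
        right
        exact_mod_cast Nat.succ_le_succ (Nat.zero_le i)
    _ = n := by simp

lemma summable_sq : Summable (fun n : ℕ => (((n : ℝ) + 1) ^ 2)⁻¹) := by
  have h0 : Summable (fun n : ℕ => 1 / (n : ℝ) ^ 2) :=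
    Real.summable_one_div_nat_pow.mpr one_lt_two
  have h := (summable_nat_add_iff 1).mpr h0
  refine h.congr fun n => ?_
  push_cast
  rw [one_div]

lemma summable_single (f : ℕ → ℂ) (C : ℝ)
    (h : ∀ n, ‖f n‖ ≤ C * (((n : ℝ) + 1) ^ 2)⁻¹) : Summable f := by
  apply Summable.of_norm
  exact Summable.of_nonneg_of_le (fun n => norm_nonneg _) h (summable_sq.mul_left C)

lemma summable_double (f : ℕ × ℕ → ℂ) (C : ℝ)
    (h : ∀ p : ℕ × ℕ,
      ‖f p‖ ≤ C * ((((p.1 : ℝ) + 1) ^ 2)⁻¹ * (((p.2 : ℝ) + 1) ^ 2)⁻¹)) : Summable f := by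
  apply Summable.of_norm
  refine Summable.of_nonneg_of_le (fun p => norm_nonneg _) h ?_
  exact (summable_sq.mul_of_nonneg summable_sq (fun n => by positivity)
    (fun n => by positivity)).mul_left C

section Lam

variable {lam : ℂ} (hlam : ∀ p : ℕ, 0 < p → lam ≠ (p : ℂ))

include hlam

lemma sub_ne (n : ℕ) : ((n + 1 : ℕ) : ℂ) - lam ≠ 0 := by
  intro h
  rw [sub_eq_zero] at h
  exact hlam (n + 1) (Nat.succ_pos n) h.symm

lemma exists_c : ∃ c : ℝ, 0 < c ∧ ∀ n : ℕ, c * ((n : ℝ) + 1) ≤ ‖((n + 1 : ℕ) : ℂ) - lam‖ := by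
  obtain ⟨B, hB⟩ := exists_nat_ge ‖lam‖
  set d : ℕ → ℝ := fun n => ‖((n + 1 : ℕ) : ℂ) - lam‖ / ((n : ℝ) + 1) with hd
  have hdpos : ∀ n, 0 < d n := fun n =>
    div_pos (norm_pos_iff.mpr (sub_ne hlam n)) (by positivity)
  have hne : (Finset.range (2 * B + 1)).Nonempty := ⟨0, by simp⟩
  refine ⟨min ((Finset.range (2 * B + 1)).inf' hne d) (1 / 2), ?_, ?_⟩
  · apply lt_min
    · exact (Finset.lt_inf'_iff hne).mpr fun i _ => hdpos i
    · norm_num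
  · intro n
    rcases le_or_gt n (2 * B) with h | h
    · have h1 : min ((Finset.range (2 * B + 1)).inf' hne d) (1 / 2) ≤ d n :=
        le_trans (min_le_left _ _) (Finset.inf'_le d (by simp [Finset.mem_range]; omega))
      calc min ((Finset.range (2 * B + 1)).inf' hne d) (1 / 2) * ((n : ℝ) + 1)
          ≤ d n * ((n : ℝ) + 1) := by
            exact mul_le_mul_of_nonneg_right h1 (by positivity)
        _ = ‖((n + 1 : ℕ) : ℂ) - lam‖ := by
            rw [hd]
            field_simp
    · have h2B : (2 * B : ℝ) < (n : ℝ) := by exact_mod_cast h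
      have hnorm : ((n : ℝ) + 1) - ‖lam‖ ≤ ‖((n + 1 : ℕ) : ℂ) - lam‖ := by
        have h3 := norm_sub_norm_le ((n + 1 : ℕ) : ℂ) lam
        rw [norm_natC] at h3
        push_cast at h3 ⊢
        linarith
      calc min ((Finset.range (2 * B + 1)).inf' hne d) (1 / 2) * ((n : ℝ) + 1)
          ≤ (1 / 2) * ((n : ℝ) + 1) :=
            mul_le_mul_of_nonneg_right (min_le_right _ _) (by positivity)
        _ ≤ ((n : ℝ) + 1) - ‖lam‖ := by linarith
        _ ≤ _ := hnorm

end Lam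

/-! ### The five double-sum summands.  Coordinates: `p.1 = b` (so `k = b+1` is the smaller
index), `p.2 = a` (so `j = m - k = a + 1`, `m = a + b + 2`). -/

noncomputable def g1 (lam : ℂ) (p : ℕ × ℕ) : ℂ :=
  (((p.1 + p.2 + 2 : ℕ) : ℂ) * (((p.1 + p.2 + 2 : ℕ) : ℂ) - lam) * ((p.1 + 1 : ℕ) : ℂ) *
    (((p.1 + 1 : ℕ) : ℂ) - lam))⁻¹

noncomputable def g2 (lam : ℂ) (p : ℕ × ℕ) : ℂ :=
  (((p.1 + p.2 + 2 : ℕ) : ℂ) * ((p.1 + 1 : ℕ) : ℂ) * ((p.2 + 1 : ℕ) : ℂ) *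
    (((p.1 + 1 : ℕ) : ℂ) - lam))⁻¹

noncomputable def g3 (lam : ℂ) (p : ℕ × ℕ) : ℂ :=
  (((p.1 + p.2 + 2 : ℕ) : ℂ) * ((p.1 + 1 : ℕ) : ℂ) * ((p.2 + 1 : ℕ) : ℂ) *
    (((p.1 + p.2 + 2 : ℕ) : ℂ) - lam))⁻¹

noncomputable def g4 (lam : ℂ) (p : ℕ × ℕ) : ℂ :=
  (((p.1 + p.2 + 2 : ℕ) : ℂ) ^ 2 * (((p.1 + p.2 + 2 : ℕ) : ℂ) - lam) * ((p.1 + 1 : ℕ) : ℂ))⁻¹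

noncomputable def g5 (lam : ℂ) (p : ℕ × ℕ) : ℂ :=
  (((p.1 + p.2 + 2 : ℕ) : ℂ) ^ 2 * (((p.1 + p.2 + 2 : ℕ) : ℂ) - lam) * ((p.2 + 1 : ℕ) : ℂ))⁻¹

/-! ### Re-indexing equivalences -/

def mkTup (p : ℕ × ℕ) : ℕ → ℕ := fun i =>
  if i = 0 then p.1 + p.2 + 2 else if i = 1 then p.1 + 1 else 0

lemma mkTup_mem (p : ℕ × ℕ) : mkTup p ∈ DecTuple 2 := by
  refine ⟨?_, ?_, ?_⟩
  · intro j hj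
    have hj0 : j = 0 := by omega
    subst hj0
    simp only [mkTup]
    norm_num
  · intro j hj
    interval_cases j <;> simp [mkTup]
  · intro j hj
    have h0 : j ≠ 0 := by omega
    have h1 : j ≠ 1 := by omega
    simp [mkTup, h0, h1]

def e2 : ℕ × ℕ ≃ DecTuple 2 where
  toFun p := ⟨mkTup p, mkTup_mem p⟩
  invFun m := (m.1 1 - 1, m.1 0 - m.1 1 - 1)
  left_inv p := by
    obtain ⟨b, a⟩ := p
    have h0 : mkTup (b, a) 0 = b + a + 2 := rfl
    have h1 : mkTup (b, a) 1 = b + 1 := rfl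
    rw [Prod.ext_iff]
    constructor <;> simp only [h0, h1] <;> omega
  right_inv m := by
    obtain ⟨m, h1, h2, h3⟩ := m
    have ha : 1 ≤ m 1 := h2 1 (by norm_num)
    have hb : m 1 < m 0 := h1 0 (by norm_num)
    apply Subtype.ext
    funext i
    match i with
    | 0 =>
      show m 1 - 1 + (m 0 - m 1 - 1) + 2 = m 0
      omega
    | 1 =>
      show m 1 - 1 + 1 = m 1
      omega
    | (j + 2) =>
      show 0 = m (j + 2)
      exact (h3 (j + 2) (by omega)).symm

lemma e2_val (p : ℕ × ℕ) : (e2 p : ℕ → ℕ) = mkTup p := rfl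

def eSig : (Σ n : ℕ, Fin (n + 1)) ≃ ℕ × ℕ where
  toFun x := (x.2, x.1 - x.2)
  invFun p := ⟨p.1 + p.2, ⟨p.1, by omega⟩⟩
  left_inv x := by
    obtain ⟨n, i⟩ := x
    have hi : (i : ℕ) ≤ n := by omega
    refine Sigma.ext ?_ ?_
    · show (i : ℕ) + (n - (i : ℕ)) = n
      omega
    · refine (Fin.heq_ext_iff (by show (i:ℕ) + (n - (i:ℕ)) + 1 = n + 1; omega)).mpr ?_
      rfl
  right_inv p := by
    obtain ⟨b, a⟩ := p
    refine Prod.ext ?_ ?_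
    · rfl
    · show b + a - b = a
      omega

/-! ### The telescoping sum `∑_j 1/(j(j+k)) = H_k / k` -/

lemma tele_partial (k N : ℕ) :
    ∑ a ∈ Finset.range N, (((a + 1 : ℕ) : ℂ) * ((a + k + 2 : ℕ) : ℂ))⁻¹
      = ((k + 1 : ℕ) : ℂ)⁻¹ *
        (Hc (k + 1) - ∑ i ∈ Finset.range (k + 1), ((N + i + 1 : ℕ) : ℂ)⁻¹) := by
  induction N with
  | zero => simp [Hc]
  | succ N ih =>
    rw [Finset.sum_range_succ, ih]
    have hS : (∑ i ∈ Finset.range (k + 1), ((N + i + 1 : ℕ) : ℂ)⁻¹)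
        - ∑ i ∈ Finset.range (k + 1), ((N + 1 + i + 1 : ℕ) : ℂ)⁻¹
        = ((N + 1 : ℕ) : ℂ)⁻¹ - ((N + k + 2 : ℕ) : ℂ)⁻¹ := by
      rw [← Finset.sum_sub_distrib]
      calc ∑ i ∈ Finset.range (k + 1),
            (((N + i + 1 : ℕ) : ℂ)⁻¹ - ((N + 1 + i + 1 : ℕ) : ℂ)⁻¹)
          = ∑ i ∈ Finset.range (k + 1),
              (((N + i + 1 : ℕ) : ℂ)⁻¹ - ((N + (i + 1) + 1 : ℕ) : ℂ)⁻¹) := by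
            refine Finset.sum_congr rfl fun i _ => ?_
            rw [show N + 1 + i + 1 = N + (i + 1) + 1 by omega]
        _ = ((N + 0 + 1 : ℕ) : ℂ)⁻¹ - ((N + (k + 1) + 1 : ℕ) : ℂ)⁻¹ :=
            Finset.sum_range_sub' (fun i => ((N + i + 1 : ℕ) : ℂ)⁻¹) (k + 1)
        _ = _ := by
            rw [show N + 0 + 1 = N + 1 by omega, show N + (k + 1) + 1 = N + k + 2 by omega]
    have e1 : (((N + 1 : ℕ) : ℂ) * ((N + k + 2 : ℕ) : ℂ))⁻¹
        = ((k + 1 : ℕ) : ℂ)⁻¹ * (((N + 1 : ℕ) : ℂ)⁻¹ - ((N + k + 2 : ℕ) : ℂ)⁻¹) := by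
      have h1 := ncast_ne N
      have h2 := ncast_ne (N + k + 1)
      have h3 := ncast_ne k
      push_cast at h1 h2 h3 ⊢
      have hNe2 : ((N : ℂ) + (k : ℂ) + 2) ≠ 0 := by
        intro h0; exact h2 (by linear_combination h0)
      rw [inv_sub_inv h1 hNe2, show ((N : ℂ) + (k : ℂ) + 2) - ((N : ℂ) + 1) = (k : ℂ) + 1 by ring,
        div_eq_mul_inv, ← mul_assoc, inv_mul_cancel₀ h3, one_mul]
    rw [e1]
    linear_combination -(((k + 1 : ℕ) : ℂ))⁻¹ * hS

lemma tele_hasSum (k : ℕ) :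
    HasSum (fun a : ℕ => (((a + 1 : ℕ) : ℂ) * ((a + k + 2 : ℕ) : ℂ))⁻¹)
      (((k + 1 : ℕ) : ℂ)⁻¹ * Hc (k + 1)) := by
  have hsum : Summable (fun a : ℕ => (((a + 1 : ℕ) : ℂ) * ((a + k + 2 : ℕ) : ℂ))⁻¹) := by
    apply summable_single _ 1
    intro n
    rw [norm_inv, norm_mul, norm_natC, norm_natC, one_mul]
    apply inv_anti₀ (by positivity)
    push_cast
    nlinarith [mul_nonneg (by positivity : (0:ℝ) ≤ (n:ℝ) + 1) (by positivity : (0:ℝ) ≤ (k:ℝ) + 1)]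
  have hlim : Tendsto (fun N : ℕ => ∑ i ∈ Finset.range (k + 1), ((N + i + 1 : ℕ) : ℂ)⁻¹)
      atTop (𝓝 0) := by
    have h0 : (0 : ℂ) = ∑ _i ∈ Finset.range (k + 1), (0 : ℂ) := by simp
    rw [h0]
    refine tendsto_finset_sum _ fun i _ => ?_
    rw [tendsto_zero_iff_norm_tendsto_zero]
    simp only [norm_inv, norm_natC]
    have h1 : Tendsto (fun N : ℕ => ((N + i + 1 : ℕ) : ℝ)) atTop atTop :=
      tendsto_natCast_atTop_atTop.comp (tendsto_add_atTop_nat (i + 1))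
    exact tendsto_inv_atTop_zero.comp h1
  have h2 : Tendsto (fun N : ℕ =>
      ∑ a ∈ Finset.range N, (((a + 1 : ℕ) : ℂ) * ((a + k + 2 : ℕ) : ℂ))⁻¹)
      atTop (𝓝 (((k + 1 : ℕ) : ℂ)⁻¹ * Hc (k + 1))) := by
    simp only [tele_partial]
    have h3 : Tendsto (fun N : ℕ =>
        Hc (k + 1) - ∑ i ∈ Finset.range (k + 1), ((N + i + 1 : ℕ) : ℂ)⁻¹)
        atTop (𝓝 (Hc (k + 1) - 0)) := tendsto_const_nhds.sub hlim
    rw [sub_zero] at h3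
    exact h3.const_mul _
  have h4 := hsum.hasSum.tendsto_sum_nat
  have h5 := tendsto_nhds_unique h4 h2
  exact h5 ▸ hsum.hasSum

/-! ### Summability of all the series involved -/

section Bounds

variable (lam : ℂ) (c : ℝ) (hc0 : 0 < c)
  (hc : ∀ n : ℕ, c * ((n : ℝ) + 1) ≤ ‖((n + 1 : ℕ) : ℂ) - lam‖)

include hc0 hc

lemma summable_g1 : Summable (g1 lam) := by
  apply summable_double _ (c * c)⁻¹
  rintro ⟨b, a⟩
  rw [g1, norm_inv, norm_mul, norm_mul, norm_mul, norm_natC, norm_natC]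
  have key : ((a : ℝ) + 1) * (c * ((a : ℝ) + 1)) * ((b : ℝ) + 1) * (c * ((b : ℝ) + 1))
      ≤ ((b + a + 2 : ℕ) : ℝ) * ‖((b + a + 2 : ℕ) : ℂ) - lam‖ * ((b + 1 : ℕ) : ℝ) *
        ‖((b + 1 : ℕ) : ℂ) - lam‖ := by
    have h1 : ((a : ℝ) + 1) ≤ ((b + a + 2 : ℕ) : ℝ) := by push_cast; linarith
    have h2 : c * ((a : ℝ) + 1) ≤ ‖((b + a + 2 : ℕ) : ℂ) - lam‖ := by
      refine le_trans ?_ (hc (b + a + 1))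
      have : (0:ℝ) ≤ c := hc0.le
      have hcast : (((b + a + 1 : ℕ)) : ℝ) = (b : ℝ) + (a : ℝ) + 1 := by push_cast; ring
      rw [hcast]
      nlinarith [Nat.cast_nonneg (α := ℝ) b]
    have h3 : ((b : ℝ) + 1) ≤ ((b + 1 : ℕ) : ℝ) := by push_cast; linarith
    have h4 : c * ((b : ℝ) + 1) ≤ ‖((b + 1 : ℕ) : ℂ) - lam‖ := hc b
    have p1 : (0:ℝ) ≤ (a : ℝ) + 1 := by positivity
    have p2 : (0:ℝ) ≤ c * ((a : ℝ) + 1) := mul_nonneg hc0.le p1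
    have p3 : (0:ℝ) ≤ (b : ℝ) + 1 := by positivity
    have p4 : (0:ℝ) ≤ c * ((b : ℝ) + 1) := mul_nonneg hc0.le p3
    have s1 : ((a : ℝ) + 1) * (c * ((a : ℝ) + 1))
        ≤ ((b + a + 2 : ℕ) : ℝ) * ‖((b + a + 2 : ℕ) : ℂ) - lam‖ :=
      mul_le_mul h1 h2 p2 (by positivity)
    have s2 := mul_le_mul s1 h3 p3 (by positivity)
    exact mul_le_mul s2 h4 p4 (by positivity)
  refine le_trans (inv_anti₀ (by positivity) key) ?_
  have he : ((a : ℝ) + 1) * (c * ((a : ℝ) + 1)) * ((b : ℝ) + 1) * (c * ((b : ℝ) + 1))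
      = (c * c) * (((b : ℝ) + 1) ^ 2 * ((a : ℝ) + 1) ^ 2) := by ring
  rw [← mul_inv, ← mul_inv, ← he]

lemma summable_g2 : Summable (g2 lam) := by
  apply summable_double _ c⁻¹
  rintro ⟨b, a⟩
  rw [g2, norm_inv, norm_mul, norm_mul, norm_mul, norm_natC, norm_natC, norm_natC]
  have key : ((a : ℝ) + 1) * ((b : ℝ) + 1) * ((a : ℝ) + 1) * (c * ((b : ℝ) + 1))
      ≤ ((b + a + 2 : ℕ) : ℝ) * ((b + 1 : ℕ) : ℝ) * ((a + 1 : ℕ) : ℝ) *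
        ‖((b + 1 : ℕ) : ℂ) - lam‖ := by
    have h1 : ((a : ℝ) + 1) ≤ ((b + a + 2 : ℕ) : ℝ) := by push_cast; linarith
    have h2 : ((b : ℝ) + 1) ≤ ((b + 1 : ℕ) : ℝ) := by push_cast; linarith
    have h3 : ((a : ℝ) + 1) ≤ ((a + 1 : ℕ) : ℝ) := by push_cast; linarith
    have h4 : c * ((b : ℝ) + 1) ≤ ‖((b + 1 : ℕ) : ℂ) - lam‖ := hc b
    have p1 : (0:ℝ) ≤ (a : ℝ) + 1 := by positivity
    have p3 : (0:ℝ) ≤ (b : ℝ) + 1 := by positivity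
    have p4 : (0:ℝ) ≤ c * ((b : ℝ) + 1) := mul_nonneg hc0.le p3
    have s1 := mul_le_mul h1 h2 p3 (by positivity)
    have s2 := mul_le_mul s1 h3 p1 (by positivity)
    exact mul_le_mul s2 h4 p4 (by positivity)
  refine le_trans (inv_anti₀ (by positivity) key) ?_
  have he : ((a : ℝ) + 1) * ((b : ℝ) + 1) * ((a : ℝ) + 1) * (c * ((b : ℝ) + 1))
      = c * (((b : ℝ) + 1) ^ 2 * ((a : ℝ) + 1) ^ 2) := by ring
  rw [he, mul_inv, mul_inv]

lemma summable_g3 : Summable (g3 lam) := by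
  apply summable_double _ c⁻¹
  rintro ⟨b, a⟩
  rw [g3, norm_inv, norm_mul, norm_mul, norm_mul, norm_natC, norm_natC, norm_natC]
  have key : ((b : ℝ) + 1) * ((b : ℝ) + 1) * ((a : ℝ) + 1) * (c * ((a : ℝ) + 1))
      ≤ ((b + a + 2 : ℕ) : ℝ) * ((b + 1 : ℕ) : ℝ) * ((a + 1 : ℕ) : ℝ) *
        ‖((b + a + 2 : ℕ) : ℂ) - lam‖ := by
    have h1 : ((b : ℝ) + 1) ≤ ((b + a + 2 : ℕ) : ℝ) := by push_cast; linarith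
    have h2 : ((b : ℝ) + 1) ≤ ((b + 1 : ℕ) : ℝ) := by push_cast; linarith
    have h3 : ((a : ℝ) + 1) ≤ ((a + 1 : ℕ) : ℝ) := by push_cast; linarith
    have h4 : c * ((a : ℝ) + 1) ≤ ‖((b + a + 2 : ℕ) : ℂ) - lam‖ := by
      refine le_trans ?_ (hc (b + a + 1))
      have hcast : (((b + a + 1 : ℕ)) : ℝ) = (b : ℝ) + (a : ℝ) + 1 := by push_cast; ring
      rw [hcast]
      nlinarith [Nat.cast_nonneg (α := ℝ) b, hc0.le]
    have p1 : (0:ℝ) ≤ (a : ℝ) + 1 := by positivity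
    have p3 : (0:ℝ) ≤ (b : ℝ) + 1 := by positivity
    have p4 : (0:ℝ) ≤ c * ((a : ℝ) + 1) := mul_nonneg hc0.le p1
    have s1 := mul_le_mul h1 h2 p3 (by positivity)
    have s2 := mul_le_mul s1 h3 p1 (by positivity)
    exact mul_le_mul s2 h4 p4 (by positivity)
  refine le_trans (inv_anti₀ (by positivity) key) ?_
  have he : ((b : ℝ) + 1) * ((b : ℝ) + 1) * ((a : ℝ) + 1) * (c * ((a : ℝ) + 1))
      = c * (((b : ℝ) + 1) ^ 2 * ((a : ℝ) + 1) ^ 2) := by ring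
  rw [he, mul_inv, mul_inv]

lemma summable_g4 : Summable (g4 lam) := by
  apply summable_double _ c⁻¹
  rintro ⟨b, a⟩
  rw [g4, norm_inv, norm_mul, norm_mul, norm_pow, norm_natC, norm_natC]
  have key : (((b : ℝ) + 1) * ((a : ℝ) + 1)) * (c * ((a : ℝ) + 1)) * ((b : ℝ) + 1)
      ≤ ((b + a + 2 : ℕ) : ℝ) ^ 2 * ‖((b + a + 2 : ℕ) : ℂ) - lam‖ * ((b + 1 : ℕ) : ℝ) := by
    have hM : ((b : ℝ) + 1) * ((a : ℝ) + 1) ≤ ((b + a + 2 : ℕ) : ℝ) ^ 2 := by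
      push_cast
      nlinarith [Nat.cast_nonneg (α := ℝ) a, Nat.cast_nonneg (α := ℝ) b]
    have h2 : ((b : ℝ) + 1) ≤ ((b + 1 : ℕ) : ℝ) := by push_cast; linarith
    have h4 : c * ((a : ℝ) + 1) ≤ ‖((b + a + 2 : ℕ) : ℂ) - lam‖ := by
      refine le_trans ?_ (hc (b + a + 1))
      have hcast : (((b + a + 1 : ℕ)) : ℝ) = (b : ℝ) + (a : ℝ) + 1 := by push_cast; ring
      rw [hcast]
      nlinarith [Nat.cast_nonneg (α := ℝ) b, hc0.le]
    have p1 : (0:ℝ) ≤ (a : ℝ) + 1 := by positivity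
    have p3 : (0:ℝ) ≤ (b : ℝ) + 1 := by positivity
    have p4 : (0:ℝ) ≤ c * ((a : ℝ) + 1) := mul_nonneg hc0.le p1
    have s1 := mul_le_mul hM h4 p4 (by positivity)
    exact mul_le_mul s1 h2 p3 (by positivity)
  refine le_trans (inv_anti₀ (by positivity) key) ?_
  have he : (((b : ℝ) + 1) * ((a : ℝ) + 1)) * (c * ((a : ℝ) + 1)) * ((b : ℝ) + 1)
      = c * (((b : ℝ) + 1) ^ 2 * ((a : ℝ) + 1) ^ 2) := by ring
  rw [he, mul_inv, mul_inv]

lemma summable_g5 : Summable (g5 lam) := by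
  apply summable_double _ c⁻¹
  rintro ⟨b, a⟩
  rw [g5, norm_inv, norm_mul, norm_mul, norm_pow, norm_natC, norm_natC]
  have key : (((b : ℝ) + 1) * ((a : ℝ) + 1)) * (c * ((b : ℝ) + 1)) * ((a : ℝ) + 1)
      ≤ ((b + a + 2 : ℕ) : ℝ) ^ 2 * ‖((b + a + 2 : ℕ) : ℂ) - lam‖ * ((a + 1 : ℕ) : ℝ) := by
    have hM : ((b : ℝ) + 1) * ((a : ℝ) + 1) ≤ ((b + a + 2 : ℕ) : ℝ) ^ 2 := by
      push_cast
      nlinarith [Nat.cast_nonneg (α := ℝ) a, Nat.cast_nonneg (α := ℝ) b]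
    have h2 : ((a : ℝ) + 1) ≤ ((a + 1 : ℕ) : ℝ) := by push_cast; linarith
    have h4 : c * ((b : ℝ) + 1) ≤ ‖((b + a + 2 : ℕ) : ℂ) - lam‖ := by
      refine le_trans ?_ (hc (b + a + 1))
      have hcast : (((b + a + 1 : ℕ)) : ℝ) = (b : ℝ) + (a : ℝ) + 1 := by push_cast; ring
      rw [hcast]
      nlinarith [Nat.cast_nonneg (α := ℝ) a, hc0.le]
    have p1 : (0:ℝ) ≤ (a : ℝ) + 1 := by positivity
    have p3 : (0:ℝ) ≤ (b : ℝ) + 1 := by positivity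
    have p4 : (0:ℝ) ≤ c * ((b : ℝ) + 1) := mul_nonneg hc0.le p3
    have s1 := mul_le_mul hM h4 p4 (by positivity)
    exact mul_le_mul s1 h2 p1 (by positivity)
  refine le_trans (inv_anti₀ (by positivity) key) ?_
  have he : (((b : ℝ) + 1) * ((a : ℝ) + 1)) * (c * ((b : ℝ) + 1)) * ((a : ℝ) + 1)
      = c * (((b : ℝ) + 1) ^ 2 * ((a : ℝ) + 1) ^ 2) := by ring
  rw [he, mul_inv, mul_inv]

omit hc0 hc in
lemma cast_pow_le (n : ℕ) (r s : ℕ) (h : r ≤ s) :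
    ((n : ℝ) + 1) ^ r ≤ ((n : ℝ) + 1) ^ s :=
  pow_le_pow_right₀ (by linarith [Nat.cast_nonneg (α := ℝ) n]) h

lemma summable_F3 :
    Summable (fun m : ℕ => (((m + 1 : ℕ) : ℂ) ^ 3 * (((m + 1 : ℕ) : ℂ) - lam))⁻¹) := by
  apply summable_single _ c⁻¹
  intro n
  rw [norm_inv, norm_mul, norm_pow, norm_natC]
  have h3 : ((n + 1 : ℕ) : ℝ) = (n : ℝ) + 1 := by push_cast; ring
  have key : c * ((n : ℝ) + 1) ^ 2
      ≤ ((n + 1 : ℕ) : ℝ) ^ 3 * ‖((n + 1 : ℕ) : ℂ) - lam‖ := by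
    calc c * ((n : ℝ) + 1) ^ 2 ≤ c * ((n : ℝ) + 1) ^ 4 :=
          mul_le_mul_of_nonneg_left (cast_pow_le n 2 4 (by norm_num)) hc0.le
      _ = ((n : ℝ) + 1) ^ 3 * (c * ((n : ℝ) + 1)) := by ring
      _ ≤ ((n + 1 : ℕ) : ℝ) ^ 3 * ‖((n + 1 : ℕ) : ℂ) - lam‖ := by
          rw [h3]
          exact mul_le_mul_of_nonneg_left (hc n) (by positivity)
  refine le_trans (inv_anti₀ (by positivity) key) ?_
  rw [mul_inv]

lemma summable_sD :
    Summable (fun n : ℕ => (((n + 2 : ℕ) : ℂ) ^ 3 * (((n + 2 : ℕ) : ℂ) - lam))⁻¹) := by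
  apply summable_single _ c⁻¹
  intro n
  rw [norm_inv, norm_mul, norm_pow, norm_natC]
  have h3 : ((n + 2 : ℕ) : ℝ) = ((n + 1 : ℕ) : ℝ) + 1 := by push_cast; ring
  have hle : ((n : ℝ) + 1) ≤ ((n + 1 : ℕ) : ℝ) + 1 := by push_cast; linarith
  have key : c * ((n : ℝ) + 1) ^ 2
      ≤ ((n + 2 : ℕ) : ℝ) ^ 3 * ‖((n + 2 : ℕ) : ℂ) - lam‖ := by
    have h4 : c * (((n + 1 : ℕ) : ℝ) + 1) ≤ ‖((n + 2 : ℕ) : ℂ) - lam‖ := hc (n + 1)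
    have hx1 : (1:ℝ) ≤ ((n + 1 : ℕ) : ℝ) + 1 := by
      have := Nat.cast_nonneg (α := ℝ) (n + 1); linarith
    calc c * ((n : ℝ) + 1) ^ 2 ≤ c * (((n + 1 : ℕ) : ℝ) + 1) ^ 2 := by
          apply mul_le_mul_of_nonneg_left _ hc0.le
          have := hle
          nlinarith [Nat.cast_nonneg (α := ℝ) n, Nat.cast_nonneg (α := ℝ) (n + 1)]
      _ ≤ c * (((n + 1 : ℕ) : ℝ) + 1) ^ 4 :=
          mul_le_mul_of_nonneg_left (pow_le_pow_right₀ hx1 (by norm_num)) hc0.le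
      _ = (((n + 1 : ℕ) : ℝ) + 1) ^ 3 * (c * (((n + 1 : ℕ) : ℝ) + 1)) := by ring
      _ ≤ ((n + 2 : ℕ) : ℝ) ^ 3 * ‖((n + 2 : ℕ) : ℂ) - lam‖ := by
          rw [h3]
          exact mul_le_mul_of_nonneg_left h4 (by positivity)
  refine le_trans (inv_anti₀ (by positivity) key) ?_
  rw [mul_inv]

lemma summable_sA :
    Summable (fun b : ℕ => Hc (b + 1) * (((b + 1 : ℕ) : ℂ) ^ 2 * (((b + 1 : ℕ) : ℂ) - lam))⁻¹) := by
  apply summable_single _ c⁻¹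
  intro n
  rw [norm_mul, norm_inv, norm_mul, norm_pow, norm_natC]
  have hH : ‖Hc (n + 1)‖ ≤ (n : ℝ) + 1 := by
    have := norm_Hc_le (n + 1); push_cast at this; linarith
  have h3 : ((n + 1 : ℕ) : ℝ) = (n : ℝ) + 1 := by push_cast; ring
  have key : c * ((n : ℝ) + 1) ^ 3
      ≤ ((n + 1 : ℕ) : ℝ) ^ 2 * ‖((n + 1 : ℕ) : ℂ) - lam‖ := by
    calc c * ((n : ℝ) + 1) ^ 3 = ((n : ℝ) + 1) ^ 2 * (c * ((n : ℝ) + 1)) := by ring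
      _ ≤ _ := by rw [h3]; exact mul_le_mul_of_nonneg_left (hc n) (by positivity)
  calc ‖Hc (n + 1)‖ * (((n + 1 : ℕ) : ℝ) ^ 2 * ‖((n + 1 : ℕ) : ℂ) - lam‖)⁻¹
      ≤ ((n : ℝ) + 1) * (c * ((n : ℝ) + 1) ^ 3)⁻¹ := by
        refine mul_le_mul hH (inv_anti₀ (by positivity) key) (by positivity) (by positivity)
    _ = c⁻¹ * (((n : ℝ) + 1) ^ 2)⁻¹ := by
        rw [mul_inv]
        field_simp

lemma summable_sB :
    Summable (fun n : ℕ => Hc (n + 1) * (((n + 2 : ℕ) : ℂ) ^ 2 * (((n + 2 : ℕ) : ℂ) - lam))⁻¹) := by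
  apply summable_single _ c⁻¹
  intro n
  rw [norm_mul, norm_inv, norm_mul, norm_pow, norm_natC]
  have hH : ‖Hc (n + 1)‖ ≤ (n : ℝ) + 2 := by
    have := norm_Hc_le (n + 1); push_cast at this; linarith
  have h3 : ((n + 2 : ℕ) : ℝ) = (n : ℝ) + 2 := by push_cast; ring
  have key : c * ((n : ℝ) + 2) ^ 3
      ≤ ((n + 2 : ℕ) : ℝ) ^ 2 * ‖((n + 2 : ℕ) : ℂ) - lam‖ := by
    have h4 : c * (((n + 1 : ℕ) : ℝ) + 1) ≤ ‖((n + 2 : ℕ) : ℂ) - lam‖ := hc (n + 1)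
    have h5 : (((n + 1 : ℕ) : ℝ) + 1) = (n : ℝ) + 2 := by push_cast; ring
    rw [h5] at h4
    calc c * ((n : ℝ) + 2) ^ 3 = ((n : ℝ) + 2) ^ 2 * (c * ((n : ℝ) + 2)) := by ring
      _ ≤ _ := by rw [h3]; exact mul_le_mul_of_nonneg_left h4 (by positivity)
  calc ‖Hc (n + 1)‖ * (((n + 2 : ℕ) : ℝ) ^ 2 * ‖((n + 2 : ℕ) : ℂ) - lam‖)⁻¹
      ≤ ((n : ℝ) + 2) * (c * ((n : ℝ) + 2) ^ 3)⁻¹ := by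
        refine mul_le_mul hH (inv_anti₀ (by positivity) key) (by positivity) (by positivity)
    _ = c⁻¹ * (((n : ℝ) + 2) ^ 2)⁻¹ := by
        rw [mul_inv]
        field_simp
    _ ≤ c⁻¹ * (((n : ℝ) + 1) ^ 2)⁻¹ := by
        apply mul_le_mul_of_nonneg_left _ (by positivity)
        apply inv_anti₀ (by positivity)
        nlinarith [Nat.cast_nonneg (α := ℝ) n]

end Bounds

/-! ### Partial fraction identities -/

lemma pf1 (M K J lam : ℂ) (hJ : J ≠ 0)
    (hKl : K - lam ≠ 0) (hMl : M - lam ≠ 0) (hsum : M = K + J) :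
    (M * (M - lam) * K * (K - lam))⁻¹
      = (M * K * J * (K - lam))⁻¹ - (M * K * J * (M - lam))⁻¹ := by
  have h1 : (K - lam)⁻¹ - (M - lam)⁻¹ = J * ((K - lam) * (M - lam))⁻¹ := by
    rw [inv_sub_inv hKl hMl, show M - lam - (K - lam) = J by rw [hsum]; ring, div_eq_mul_inv]
  have e2 : (M * K * J * (K - lam))⁻¹ = (M * K)⁻¹ * J⁻¹ * (K - lam)⁻¹ := by
    rw [mul_inv, mul_inv]
  have e3 : (M * K * J * (M - lam))⁻¹ = (M * K)⁻¹ * J⁻¹ * (M - lam)⁻¹ := by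
    rw [mul_inv, mul_inv]
  rw [e2, e3,
    show (M * K)⁻¹ * J⁻¹ * (K - lam)⁻¹ - (M * K)⁻¹ * J⁻¹ * (M - lam)⁻¹
      = (M * K)⁻¹ * J⁻¹ * ((K - lam)⁻¹ - (M - lam)⁻¹) by ring, h1,
    show (M * K)⁻¹ * J⁻¹ * (J * ((K - lam) * (M - lam))⁻¹)
      = (M * K)⁻¹ * ((K - lam) * (M - lam))⁻¹ * (J⁻¹ * J) by ring,
    inv_mul_cancel₀ hJ, mul_one, ← mul_inv]
  congr 1
  ring

lemma pf2 (M K J lam : ℂ) (hM : M ≠ 0) (hK : K ≠ 0) (hJ : J ≠ 0) (hsum : M = K + J) :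
    (M * K * J * (M - lam))⁻¹ = (M ^ 2 * (M - lam) * K)⁻¹ + (M ^ 2 * (M - lam) * J)⁻¹ := by
  have h1 : K⁻¹ + J⁻¹ = M * (K * J)⁻¹ := by
    rw [inv_add_inv hK hJ, ← hsum, div_eq_mul_inv]
  have e1 : (M ^ 2 * (M - lam) * K)⁻¹ + (M ^ 2 * (M - lam) * J)⁻¹
      = (M ^ 2 * (M - lam))⁻¹ * (K⁻¹ + J⁻¹) := by
    simp only [mul_inv]; ring
  rw [e1, h1, show (M ^ 2 * (M - lam))⁻¹ * (M * (K * J)⁻¹)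
      = (M⁻¹ * M) * (M⁻¹ * (M - lam)⁻¹ * K⁻¹ * J⁻¹) by
        simp only [mul_inv]; ring,
    inv_mul_cancel₀ hM, one_mul]
  simp only [mul_inv]
  ring

end F1111Aux

set_option maxHeartbeats 1000000 in
/-- `f(1,1,1,1;λ) = F(3;λ) - F(2,1;λ)` for `λ` not a positive integer. -/
theorem f1111_eq (lam : ℂ) (hlam : ∀ p : ℕ, 0 < p → lam ≠ (p : ℂ)) :
    (∑' m : DecTuple 2,
        ((m.1 0 : ℂ) * ((m.1 0 : ℂ) - lam) * (m.1 1 : ℂ) * ((m.1 1 : ℂ) - lam))⁻¹)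
      = (∑' m : ℕ, (((m + 1 : ℕ) : ℂ) ^ 3 * (((m + 1 : ℕ) : ℂ) - lam))⁻¹)
        - (∑' m : DecTuple 2,
            ((m.1 0 : ℂ) ^ 2 * ((m.1 0 : ℂ) - lam) * (m.1 1 : ℂ))⁻¹) := by
  classical
  obtain ⟨c, hc0, hc⟩ := F1111Aux.exists_c hlam
  have hg2 := F1111Aux.summable_g2 lam c hc0 hc
  have hg3 := F1111Aux.summable_g3 lam c hc0 hc
  have hg4 := F1111Aux.summable_g4 lam c hc0 hc
  have hg5 := F1111Aux.summable_g5 lam c hc0 hc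
  have hF3 := F1111Aux.summable_F3 lam c hc0 hc
  have hsD := F1111Aux.summable_sD lam c hc0 hc
  have hsA := F1111Aux.summable_sA lam c hc0 hc
  have hsB := F1111Aux.summable_sB lam c hc0 hc
  have hnz : ∀ n : ℕ, ((n + 1 : ℕ) : ℂ) ≠ 0 := F1111Aux.ncast_ne
  have hsub := F1111Aux.sub_ne hlam
  -- conversion of the two sums over `DecTuple 2` into sums over `ℕ × ℕ`
  have hL : (∑' m : DecTuple 2,
      ((m.1 0 : ℂ) * ((m.1 0 : ℂ) - lam) * (m.1 1 : ℂ) * ((m.1 1 : ℂ) - lam))⁻¹)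
      = ∑' p : ℕ × ℕ, F1111Aux.g1 lam p := by
    rw [← Equiv.tsum_eq F1111Aux.e2 (fun m : DecTuple 2 =>
      ((m.1 0 : ℂ) * ((m.1 0 : ℂ) - lam) * (m.1 1 : ℂ) * ((m.1 1 : ℂ) - lam))⁻¹)]
    refine tsum_congr fun p => ?_
    have h0 : ((F1111Aux.e2 p : ℕ → ℕ)) 0 = p.1 + p.2 + 2 := rfl
    have h1 : ((F1111Aux.e2 p : ℕ → ℕ)) 1 = p.1 + 1 := rfl
    rw [F1111Aux.g1, h0, h1]
  have hR : (∑' m : DecTuple 2,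
      ((m.1 0 : ℂ) ^ 2 * ((m.1 0 : ℂ) - lam) * (m.1 1 : ℂ))⁻¹)
      = ∑' p : ℕ × ℕ, F1111Aux.g4 lam p := by
    rw [← Equiv.tsum_eq F1111Aux.e2 (fun m : DecTuple 2 =>
      ((m.1 0 : ℂ) ^ 2 * ((m.1 0 : ℂ) - lam) * (m.1 1 : ℂ))⁻¹)]
    refine tsum_congr fun p => ?_
    have h0 : ((F1111Aux.e2 p : ℕ → ℕ)) 0 = p.1 + p.2 + 2 := rfl
    have h1 : ((F1111Aux.e2 p : ℕ → ℕ)) 1 = p.1 + 1 := rfl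
    rw [F1111Aux.g4, h0, h1]
  -- pointwise partial fractions: g1 = g2 - g3
  have key12 : ∑' p : ℕ × ℕ, F1111Aux.g1 lam p
      = (∑' p : ℕ × ℕ, F1111Aux.g2 lam p) - ∑' p : ℕ × ℕ, F1111Aux.g3 lam p := by
    rw [← Summable.tsum_sub hg2 hg3]
    refine tsum_congr fun p => ?_
    obtain ⟨b, a⟩ := p
    simp only [F1111Aux.g1, F1111Aux.g2, F1111Aux.g3]
    exact F1111Aux.pf1 _ _ _ lam (hnz a) (hsub b) (hsub (b + a + 1)) (by push_cast; ring)
  -- pointwise partial fractions: g3 = g4 + g5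
  have key3 : ∑' p : ℕ × ℕ, F1111Aux.g3 lam p
      = (∑' p : ℕ × ℕ, F1111Aux.g4 lam p) + ∑' p : ℕ × ℕ, F1111Aux.g5 lam p := by
    rw [← Summable.tsum_add hg4 hg5]
    refine tsum_congr fun p => ?_
    obtain ⟨b, a⟩ := p
    simp only [F1111Aux.g3, F1111Aux.g4, F1111Aux.g5]
    exact F1111Aux.pf2 _ _ _ lam (hnz (b + a + 1)) (hnz b) (hnz a) (by push_cast; ring)
  -- symmetry: sum of g5 equals sum of g4
  have key45 : ∑' p : ℕ × ℕ, F1111Aux.g5 lam p = ∑' p : ℕ × ℕ, F1111Aux.g4 lam p := by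
    rw [← Equiv.tsum_eq (Equiv.prodComm ℕ ℕ) (F1111Aux.g4 lam)]
    refine tsum_congr fun p => ?_
    obtain ⟨b, a⟩ := p
    simp only [F1111Aux.g4, F1111Aux.g5, Equiv.prodComm_apply, Prod.swap_prod_mk]
    rw [Nat.add_comm b a]
  -- Fubini and the telescoping evaluation of the inner sum of g2
  have hinner : ∀ b : ℕ, HasSum (fun a => F1111Aux.g2 lam (b, a))
      (F1111Aux.Hc (b + 1) * (((b + 1 : ℕ) : ℂ) ^ 2 * (((b + 1 : ℕ) : ℂ) - lam))⁻¹) := by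
    intro b
    have h0 := (F1111Aux.tele_hasSum b).mul_left
      ((((b + 1 : ℕ) : ℂ) * (((b + 1 : ℕ) : ℂ) - lam))⁻¹)
    have heq : (fun a : ℕ => (((b + 1 : ℕ) : ℂ) * (((b + 1 : ℕ) : ℂ) - lam))⁻¹ *
        (((a + 1 : ℕ) : ℂ) * ((a + b + 2 : ℕ) : ℂ))⁻¹) = fun a => F1111Aux.g2 lam (b, a) := by
      funext a
      rw [F1111Aux.g2, ← mul_inv]
      congr 1
      push_cast
      ring
    have hval : (((b + 1 : ℕ) : ℂ) * (((b + 1 : ℕ) : ℂ) - lam))⁻¹ *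
        (((b + 1 : ℕ) : ℂ)⁻¹ * F1111Aux.Hc (b + 1))
        = F1111Aux.Hc (b + 1) * (((b + 1 : ℕ) : ℂ) ^ 2 * (((b + 1 : ℕ) : ℂ) - lam))⁻¹ := by
      rw [mul_inv, mul_inv, sq, mul_inv]
      ring
    rw [heq, hval] at h0
    exact h0
  have hS2 : ∑' p : ℕ × ℕ, F1111Aux.g2 lam p
      = ∑' b : ℕ, F1111Aux.Hc (b + 1) * (((b + 1 : ℕ) : ℂ) ^ 2 * (((b + 1 : ℕ) : ℂ) - lam))⁻¹ := by
    rw [Summable.tsum_prod' hg2 fun b => hg2.prod_factor b]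
    exact tsum_congr fun b => (hinner b).tsum_eq
  -- grouping the sum of g4 along antidiagonals
  have hsig : ∑' p : ℕ × ℕ, F1111Aux.g4 lam p
      = ∑' n : ℕ, F1111Aux.Hc (n + 1) * (((n + 2 : ℕ) : ℂ) ^ 2 * (((n + 2 : ℕ) : ℂ) - lam))⁻¹ := by
    rw [← Equiv.tsum_eq F1111Aux.eSig (F1111Aux.g4 lam)]
    have hsx : Summable (fun x : Σ n : ℕ, Fin (n + 1) => F1111Aux.g4 lam (F1111Aux.eSig x)) :=
      (F1111Aux.eSig.summable_iff (f := F1111Aux.g4 lam)).mpr hg4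
    rw [Summable.tsum_sigma' (fun n => Summable.of_finite) hsx]
    refine tsum_congr fun n => ?_
    rw [tsum_fintype]
    have hterm : ∀ i : Fin (n + 1), F1111Aux.g4 lam (F1111Aux.eSig ⟨n, i⟩)
        = (((n + 2 : ℕ) : ℂ) ^ 2 * (((n + 2 : ℕ) : ℂ) - lam))⁻¹ * (((i : ℕ) + 1 : ℕ) : ℂ)⁻¹ := by
      intro i
      have hval : (i : ℕ) + (n - (i : ℕ)) + 2 = n + 2 := by omega
      show F1111Aux.g4 lam ((i : ℕ), n - (i : ℕ)) = _
      rw [F1111Aux.g4]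
      show ((((i : ℕ) + (n - (i : ℕ)) + 2 : ℕ) : ℂ) ^ 2 *
        ((((i : ℕ) + (n - (i : ℕ)) + 2 : ℕ) : ℂ) - lam) * (((i : ℕ) + 1 : ℕ) : ℂ))⁻¹ = _
      rw [hval, mul_inv]
    rw [Finset.sum_congr rfl fun i _ => hterm i, ← Finset.mul_sum]
    have hHc : (∑ i : Fin (n + 1), (((i : ℕ) + 1 : ℕ) : ℂ)⁻¹) = F1111Aux.Hc (n + 1) := by
      rw [F1111Aux.Hc]
      exact Fin.sum_univ_eq_sum_range (fun i => ((i + 1 : ℕ) : ℂ)⁻¹) (n + 1)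
    rw [hHc, mul_comm]
  -- the final rearrangement of single sums
  have hclaim : (∑' b : ℕ, F1111Aux.Hc (b + 1) *
        (((b + 1 : ℕ) : ℂ) ^ 2 * (((b + 1 : ℕ) : ℂ) - lam))⁻¹)
      = (∑' m : ℕ, (((m + 1 : ℕ) : ℂ) ^ 3 * (((m + 1 : ℕ) : ℂ) - lam))⁻¹)
        + ∑' n : ℕ, F1111Aux.Hc (n + 1) *
            (((n + 2 : ℕ) : ℂ) ^ 2 * (((n + 2 : ℕ) : ℂ) - lam))⁻¹ := by
    rw [Summable.tsum_eq_zero_add hsA, Summable.tsum_eq_zero_add hF3]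
    have hsplit : (∑' n : ℕ, F1111Aux.Hc (n + 1 + 1) *
          (((n + 1 + 1 : ℕ) : ℂ) ^ 2 * (((n + 1 + 1 : ℕ) : ℂ) - lam))⁻¹)
        = (∑' n : ℕ, (((n + 2 : ℕ) : ℂ) ^ 3 * (((n + 2 : ℕ) : ℂ) - lam))⁻¹)
          + ∑' n : ℕ, F1111Aux.Hc (n + 1) *
              (((n + 2 : ℕ) : ℂ) ^ 2 * (((n + 2 : ℕ) : ℂ) - lam))⁻¹ := by
      rw [← Summable.tsum_add hsD hsB]
      refine tsum_congr fun n => ?_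
      rw [show n + 1 + 1 = n + 2 from rfl, F1111Aux.Hc_succ (n + 1)]
      have hcube : (((n + 2 : ℕ) : ℂ))⁻¹ * (((n + 2 : ℕ) : ℂ) ^ 2 * (((n + 2 : ℕ) : ℂ) - lam))⁻¹
          = (((n + 2 : ℕ) : ℂ) ^ 3 * (((n + 2 : ℕ) : ℂ) - lam))⁻¹ := by
        rw [← mul_inv]
        congr 1
        ring
      linear_combination hcube
    rw [hsplit]
    have h1 : F1111Aux.Hc (0 + 1) * (((0 + 1 : ℕ) : ℂ) ^ 2 * (((0 + 1 : ℕ) : ℂ) - lam))⁻¹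
        = (((0 + 1 : ℕ) : ℂ) ^ 3 * (((0 + 1 : ℕ) : ℂ) - lam))⁻¹ := by
      simp [F1111Aux.Hc]
    linear_combination h1
  rw [hL, hR, key12, key3, key45, hsig, hS2, hclaim]
  ring
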